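/- With A the quantum complete intersection as below, the Lie algebra L = HH¹(A) has trivial center: Z(L) = {0}. -/

import Mathlib

section HochschildPrelim

variable (k : Type*) [CommRing k] (A : Type*) [Ring A] [Algebra k A]

attribute [local instance] LieRing.ofAssociativeRing

/-- A derivation of the `k`-algebra `A`: a `k`-linear map satisfying the Leibniz rule. -/
def IsDeriv (f : Module.End k A) : Prop := ∀ a b : A, f (a * b) = a * f b + f a * b

/-- An inner derivation `[c, -] : a ↦ c*a - a*c`. -/
def IsInner (f : Module.End k A) : Prop := ∃ c : A, ∀ a : A, f a = c * a - a * c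

/-- The Lie algebra `Der(A)` of derivations, as a Lie subalgebra of `End_k(A)`
(with the commutator bracket). -/
def Der : LieSubalgebra k (Module.End k A) where
  carrier := {f | IsDeriv k A f}
  add_mem' := by
    intro f g hf hg
    intro a b
    simp only [LinearMap.add_apply, hf a b, hg a b]
    noncomm_ring
  zero_mem' := by intro a b; simp
  smul_mem' := by
    intro c f hf
    intro a b
    simp only [LinearMap.smul_apply, hf a b, smul_add, mul_smul_comm, smul_mul_assoc]
  lie_mem' := by
    intro f g hf hg
    intro a b
    rw [Ring.lie_def]
    simp only [LinearMap.sub_apply, Module.End.mul_apply]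
    rw [hg a b, map_add, hf a (g b), hf (g a) b, hf a b, map_add, hg a (f b), hg (f a) b,
      mul_sub, sub_mul]
    abel

/-- The inner derivations form a Lie ideal `IDer(A)` of `Der(A)`. -/
def IDer : LieIdeal k (Der k A) where
  carrier := {f | IsInner k A f.1}
  add_mem' := by
    rintro f g ⟨c, hc⟩ ⟨d, hd⟩
    refine ⟨c + d, fun a => ?_⟩
    show f.1 a + g.1 a = _
    rw [hc, hd]
    noncomm_ring
  zero_mem' := ⟨0, fun a => by simp⟩
  smul_mem' := by
    rintro t f ⟨c, hc⟩
    refine ⟨t • c, fun a => ?_⟩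
    show t • f.1 a = _
    rw [hc, smul_sub, smul_mul_assoc, mul_smul_comm]
  lie_mem := by
    rintro x m ⟨c, hc⟩
    refine ⟨x.1 c, fun a => ?_⟩
    have hx : IsDeriv k A x.1 := x.2
    have h : (↑(⁅x, m⁆ : Der k A) : Module.End k A) a = x.1 (m.1 a) - m.1 (x.1 a) := rfl
    rw [h, hc, hc, map_sub, hx c a, hx a c]
    abel

/-- The first Hochschild cohomology `HH¹(A) = Der(A)/IDer(A)`, as a quotient Lie algebra. -/
abbrev HH1 := Der k A ⧸ IDer k A

end HochschildPrelim

structure QCI (k : Type*) [Field k] (A : Type*) [Ring A] [Algebra k A] where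
  p : ℕ
  e : ℕ
  q : k
  x : A
  y : A
  b : Module.Basis (Fin p × Fin p) k A
  hp : p.Prime
  hodd : Odd p
  hchar : CharP k p
  hq : orderOf q = e
  he : 2 ≤ e
  hediv : e ∣ p - 1
  hx : x ^ p = 0
  hy : y ^ p = 0
  hyx : y * x = q • (x * y)
  hb : ∀ ij : Fin p × Fin p, b ij = x ^ (ij.1 : ℕ) * y ^ (ij.2 : ℕ)

namespace QCI

variable {k : Type*} [Field k] {A : Type*} [Ring A] [Algebra k A] (S : QCI k A)

lemma two_lt_p : 2 < S.p := by
  have h2 := S.hp.two_le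
  rcases S.hodd with ⟨m, hm⟩
  omega

lemma e_lt_p : S.e < S.p := by
  have h1 : 0 < S.p - 1 := by have := S.hp.two_le; omega
  have := Nat.le_of_dvd h1 S.hediv
  omega

lemma qe : S.q ^ S.e = 1 := by rw [← S.hq]; exact pow_orderOf_eq_one S.q

lemma qp1 : S.q ^ (S.p - 1) = 1 := by
  obtain ⟨m, hm⟩ := S.hediv
  rw [hm, pow_mul, S.qe, one_pow]

lemma q_ne_one : S.q ≠ 1 := fun h => by
  have h2 := S.he; have := S.hq; rw [h, orderOf_one] at this; omega

lemma cast_ne_zero {i : ℕ} (h0 : 0 < i) (hip : i < S.p) : (i : k) ≠ 0 := by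
  haveI := S.hchar
  rw [Ne, CharP.cast_eq_zero_iff k S.p i]
  intro hdvd
  exact absurd (Nat.le_of_dvd h0 hdvd) (by omega)

lemma cast_eq_one {i : ℕ} (hip : i < S.p) (h : (i : k) = 1) : i = 1 := by
  haveI := S.hchar
  rcases i with _ | m
  · exfalso; rw [Nat.cast_zero] at h; exact zero_ne_one h
  · have hm : ((m : ℕ) : k) = 0 := by
      push_cast at h
      calc ((m : ℕ) : k) = ((m : k) + 1) - 1 := by ring
      _ = 0 := by rw [h]; ring
    rw [CharP.cast_eq_zero_iff k S.p m] at hm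
    have := Nat.eq_zero_of_dvd_of_lt hm (by omega)
    omega


/-- The monomial `x^i y^j`. -/
def mon (i j : ℕ) : A := S.x ^ i * S.y ^ j

lemma xpow_zero {n : ℕ} (hn : S.p ≤ n) : S.x ^ n = 0 := by
  have h : S.x ^ n = S.x ^ S.p * S.x ^ (n - S.p) := by rw [← pow_add]; congr 1; omega
  rw [h, S.hx, zero_mul]

lemma ypow_zero {n : ℕ} (hn : S.p ≤ n) : S.y ^ n = 0 := by
  have h : S.y ^ n = S.y ^ S.p * S.y ^ (n - S.p) := by rw [← pow_add]; congr 1; omega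
  rw [h, S.hy, zero_mul]

lemma mon_zero {i j : ℕ} (h : S.p ≤ i ∨ S.p ≤ j) : S.mon i j = 0 := by
  rcases h with h | h
  · rw [mon, S.xpow_zero h, zero_mul]
  · rw [mon, S.ypow_zero h, mul_zero]

lemma y_mul_xpow (i : ℕ) : S.y * S.x ^ i = S.q ^ i • (S.x ^ i * S.y) := by
  induction i with
  | zero => simp
  | succ n ih =>
    calc S.y * S.x ^ (n+1) = (S.y * S.x ^ n) * S.x := by rw [pow_succ, mul_assoc]
    _ = S.q ^ n • ((S.x ^ n * S.y) * S.x) := by rw [ih, smul_mul_assoc]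
    _ = S.q ^ n • (S.x ^ n * (S.y * S.x)) := by rw [mul_assoc]
    _ = S.q ^ n • (S.x ^ n * (S.q • (S.x * S.y))) := by rw [S.hyx]
    _ = (S.q ^ n * S.q) • (S.x ^ n * (S.x * S.y)) := by rw [mul_smul_comm, smul_smul]
    _ = S.q ^ (n+1) • (S.x ^ (n+1) * S.y) := by rw [← mul_assoc, ← pow_succ, ← pow_succ]

lemma ypow_mul_xpow (i j : ℕ) : S.y ^ j * S.x ^ i = S.q ^ (i * j) • (S.x ^ i * S.y ^ j) := by
  induction j with
  | zero => simp
  | succ n ih =>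
    calc S.y ^ (n+1) * S.x ^ i = S.y ^ n * (S.y * S.x ^ i) := by rw [pow_succ, mul_assoc]
    _ = S.y ^ n * (S.q ^ i • (S.x ^ i * S.y)) := by rw [S.y_mul_xpow]
    _ = S.q ^ i • ((S.y ^ n * S.x ^ i) * S.y) := by rw [mul_smul_comm, mul_assoc]
    _ = (S.q ^ i * S.q ^ (i * n)) • ((S.x ^ i * S.y ^ n) * S.y) := by
        rw [ih, smul_mul_assoc, smul_smul]
    _ = S.q ^ (i * (n+1)) • (S.x ^ i * S.y ^ (n+1)) := by
        rw [mul_assoc, ← pow_succ, ← pow_add]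
        congr 2
        ring

lemma mon_mul (i j u v : ℕ) :
    S.mon i j * S.mon u v = S.q ^ (j * u) • S.mon (i + u) (j + v) := by
  unfold mon
  calc S.x ^ i * S.y ^ j * (S.x ^ u * S.y ^ v)
      = S.x ^ i * ((S.y ^ j * S.x ^ u) * S.y ^ v) := by
        rw [mul_assoc, ← mul_assoc (S.y ^ j)]
  _ = S.x ^ i * ((S.q ^ (u * j) • (S.x ^ u * S.y ^ j)) * S.y ^ v) := by rw [S.ypow_mul_xpow]
  _ = S.q ^ (j * u) • (S.x ^ i * (S.x ^ u * (S.y ^ j * S.y ^ v))) := by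
        rw [smul_mul_assoc, mul_smul_comm, mul_assoc]
        congr 2
        ring
  _ = S.q ^ (j * u) • (S.x ^ (i + u) * S.y ^ (j + v)) := by rw [← mul_assoc, ← pow_add, ← pow_add]

lemma x_eq : S.x = S.mon 1 0 := by simp [mon]
lemma y_eq : S.y = S.mon 0 1 := by simp [mon]
lemma ypow_eq (m : ℕ) : S.y ^ m = S.mon 0 m := by simp [mon]

lemma b_eq (uv : Fin S.p × Fin S.p) : S.b uv = S.mon uv.1 uv.2 := S.hb uv

/-- Coefficient extraction as a linear functional. -/
noncomputable def coefL (i j : ℕ) : A →ₗ[k] k :=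
  if h : i < S.p ∧ j < S.p then
    (LinearMap.proj ((⟨i, h.1⟩, ⟨j, h.2⟩) : Fin S.p × Fin S.p)) ∘ₗ
      (S.b.equivFun : A →ₗ[k] (Fin S.p × Fin S.p → k))
  else 0

/-- The coefficient of `x^i y^j` in `z`. -/
noncomputable def coef (z : A) (i j : ℕ) : k := S.coefL i j z

lemma coef_apply (z : A) (i j : ℕ) (hi : i < S.p) (hj : j < S.p) :
    S.coef z i j = S.b.equivFun z (⟨i, hi⟩, ⟨j, hj⟩) := by
  rw [coef, coefL, dif_pos ⟨hi, hj⟩]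
  rfl

lemma coef_oor (z : A) {i j : ℕ} (h : S.p ≤ i ∨ S.p ≤ j) : S.coef z i j = 0 := by
  rw [coef, coefL, dif_neg (by omega), LinearMap.zero_apply]

lemma coef_fin (z : A) (uv : Fin S.p × Fin S.p) :
    S.coef z (uv.1 : ℕ) (uv.2 : ℕ) = S.b.equivFun z uv := by
  rw [S.coef_apply z _ _ uv.1.isLt uv.2.isLt]

lemma coef_add (z w : A) (i j : ℕ) : S.coef (z + w) i j = S.coef z i j + S.coef w i j :=
  map_add (S.coefL i j) z w

lemma coef_sub (z w : A) (i j : ℕ) : S.coef (z - w) i j = S.coef z i j - S.coef w i j :=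
  map_sub (S.coefL i j) z w

lemma coef_smul (a : k) (z : A) (i j : ℕ) : S.coef (a • z) i j = a * S.coef z i j :=
  map_smul (S.coefL i j) a z

lemma coef_neg (z : A) (i j : ℕ) : S.coef (-z) i j = - S.coef z i j :=
  map_neg (S.coefL i j) z

lemma sum_coef (z : A) :
    (∑ uv : Fin S.p × Fin S.p, S.coef z (uv.1 : ℕ) (uv.2 : ℕ) • S.b uv) = z := by
  have h := S.b.sum_equivFun z
  calc (∑ uv : Fin S.p × Fin S.p, S.coef z (uv.1 : ℕ) (uv.2 : ℕ) • S.b uv)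
      = ∑ uv : Fin S.p × Fin S.p, S.b.equivFun z uv • S.b uv := by
        refine Finset.sum_congr rfl fun uv _ => ?_
        rw [S.coef_fin]
  _ = z := h

lemma ext_coef (z w : A)
    (h : ∀ i j : ℕ, i < S.p → j < S.p → S.coef z i j = S.coef w i j) : z = w := by
  apply S.b.equivFun.injective
  funext uv
  have := h uv.1 uv.2 uv.1.isLt uv.2.isLt
  rwa [S.coef_fin, S.coef_fin] at this

lemma coef_mon (u v i j : ℕ) :
    S.coef (S.mon u v) i j = if u = i ∧ v = j ∧ i < S.p ∧ j < S.p then 1 else 0 := by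
  by_cases hij : i < S.p ∧ j < S.p
  · by_cases huv : u < S.p ∧ v < S.p
    · have hbm : S.mon u v = S.b (⟨u, huv.1⟩, ⟨v, huv.2⟩) := by rw [S.b_eq]
      rw [hbm, S.coef_apply _ _ _ hij.1 hij.2, Module.Basis.equivFun_self]
      by_cases heq : u = i ∧ v = j
      · rw [if_pos, if_pos ⟨heq.1, heq.2, hij⟩]
        simp [Prod.ext_iff, Fin.ext_iff, heq.1, heq.2]
      · rw [if_neg, if_neg (by tauto)]
        simp only [Prod.ext_iff, Fin.ext_iff]
        tauto
    · rw [S.mon_zero (by omega), if_neg (by omega)]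
      exact map_zero (S.coefL i j)
  · rw [S.coef_oor _ (by omega), if_neg (by tauto)]


lemma coef_map (T : Module.End k A) (d : ℕ → ℕ → k) (s t : ℕ → ℕ → ℕ)
    (hT : ∀ u v : ℕ, u < S.p → v < S.p → T (S.mon u v) = d u v • S.mon (s u v) (t u v))
    (z : A) (i j : ℕ) :
    S.coef (T z) i j = ∑ uv : Fin S.p × Fin S.p,
      S.coef z (uv.1 : ℕ) (uv.2 : ℕ) *
        (d (uv.1 : ℕ) (uv.2 : ℕ) * S.coef (S.mon (s (uv.1 : ℕ) (uv.2 : ℕ)) (t (uv.1 : ℕ) (uv.2 : ℕ))) i j) := by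
  conv_lhs => rw [← S.sum_coef z]
  rw [map_sum]
  show S.coefL i j _ = _
  rw [map_sum]
  refine Finset.sum_congr rfl fun uv _ => ?_
  have h1 : T (S.coef z (uv.1 : ℕ) (uv.2 : ℕ) • S.b uv)
      = S.coef z (uv.1 : ℕ) (uv.2 : ℕ) •
        (d (uv.1 : ℕ) (uv.2 : ℕ) • S.mon (s (uv.1 : ℕ) (uv.2 : ℕ)) (t (uv.1 : ℕ) (uv.2 : ℕ))) := by
    rw [map_smul, S.b_eq uv, hT _ _ uv.1.isLt uv.2.isLt]
  rw [h1, map_smul, map_smul, smul_eq_mul, smul_eq_mul]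
  rfl

lemma coef_map_single (T : Module.End k A) (d : ℕ → ℕ → k) (s t : ℕ → ℕ → ℕ)
    (hT : ∀ u v : ℕ, u < S.p → v < S.p → T (S.mon u v) = d u v • S.mon (s u v) (t u v))
    (z : A) (i j u₀ v₀ : ℕ) (hi : i < S.p) (hj : j < S.p) (hu₀ : u₀ < S.p) (hv₀ : v₀ < S.p)
    (hm1 : s u₀ v₀ = i) (hm2 : t u₀ v₀ = j)
    (huniq : ∀ u v : ℕ, u < S.p → v < S.p → s u v = i → t u v = j → d u v ≠ 0 →
      u = u₀ ∧ v = v₀) :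
    S.coef (T z) i j = S.coef z u₀ v₀ * d u₀ v₀ := by
  rw [S.coef_map T d s t hT z i j]
  rw [Finset.sum_eq_single ((⟨u₀, hu₀⟩, ⟨v₀, hv₀⟩) : Fin S.p × Fin S.p)]
  · rw [S.coef_mon, if_pos ⟨hm1, hm2, hi, hj⟩, mul_one]
  · intro uv _ hne
    rcases eq_or_ne (d (uv.1 : ℕ) (uv.2 : ℕ)) 0 with h0 | h0
    · rw [h0, zero_mul, mul_zero]
    · rw [S.coef_mon, if_neg, mul_zero, mul_zero]
      rintro ⟨h1, h2, -, -⟩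
      obtain ⟨e1, e2⟩ := huniq _ _ uv.1.isLt uv.2.isLt h1 h2 h0
      exact hne (Prod.ext (Fin.ext e1) (Fin.ext e2))
  · intro habs
    exact absurd (Finset.mem_univ _) habs


lemma isDeriv_of_basis (T : Module.End k A)
    (hT : ∀ uv uv' : Fin S.p × Fin S.p,
      T (S.b uv * S.b uv') = S.b uv * T (S.b uv') + T (S.b uv) * S.b uv') :
    IsDeriv k A T := by
  have step1 : ∀ uv : Fin S.p × Fin S.p, ∀ z : A,
      T (S.b uv * z) = S.b uv * T z + T (S.b uv) * z := by
    intro uv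
    have h : T ∘ₗ LinearMap.mulLeft k (S.b uv)
        = LinearMap.mulLeft k (S.b uv) ∘ₗ T + LinearMap.mulLeft k (T (S.b uv)) := by
      refine S.b.ext fun uv' => ?_
      simpa using hT uv uv'
    intro z
    have := DFunLike.congr_fun h z
    simpa using this
  intro a c
  have h2 : T ∘ₗ LinearMap.mulRight k c
      = LinearMap.mulRight k (T c) + LinearMap.mulRight k c ∘ₗ T := by
    refine S.b.ext fun uv => ?_
    simpa using step1 uv c
  have := DFunLike.congr_fun h2 a
  simpa using this

/-- The Euler derivation `x ∂/∂x`. -/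
noncomputable def Ex : Module.End k A :=
  S.b.constr k fun uv => ((uv.1 : ℕ) : k) • S.mon (uv.1 : ℕ) (uv.2 : ℕ)

/-- The Euler derivation `y ∂/∂y`. -/
noncomputable def Ey : Module.End k A :=
  S.b.constr k fun uv => ((uv.2 : ℕ) : k) • S.mon (uv.1 : ℕ) (uv.2 : ℕ)

/-- The derivation sending `x ↦ x·y^e`, `y ↦ 0`. -/
noncomputable def G : Module.End k A :=
  S.b.constr k fun uv => ((uv.1 : ℕ) : k) • S.mon (uv.1 : ℕ) ((uv.2 : ℕ) + S.e)

/-- The derivation sending `x ↦ y^(p-1)`, `y ↦ 0`. -/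
noncomputable def D : Module.End k A :=
  S.b.constr k fun uv => ((uv.1 : ℕ) : k) • S.mon ((uv.1 : ℕ) - 1) ((uv.2 : ℕ) + (S.p - 1))

lemma Ex_mon (u v : ℕ) : S.Ex (S.mon u v) = (u : k) • S.mon u v := by
  by_cases h : u < S.p ∧ v < S.p
  · have hbm : S.mon u v = S.b (⟨u, h.1⟩, ⟨v, h.2⟩) := by rw [S.b_eq]
    conv_lhs => rw [hbm]
    rw [Ex, S.b.constr_basis]
    all_goals rfl
  · rw [S.mon_zero (by omega), map_zero, smul_zero]

lemma Ey_mon (u v : ℕ) : S.Ey (S.mon u v) = (v : k) • S.mon u v := by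
  by_cases h : u < S.p ∧ v < S.p
  · have hbm : S.mon u v = S.b (⟨u, h.1⟩, ⟨v, h.2⟩) := by rw [S.b_eq]
    conv_lhs => rw [hbm]
    rw [Ey, S.b.constr_basis]
    all_goals rfl
  · rw [S.mon_zero (by omega), map_zero, smul_zero]

lemma G_mon (u v : ℕ) : S.G (S.mon u v) = (u : k) • S.mon u (v + S.e) := by
  by_cases h : u < S.p ∧ v < S.p
  · have hbm : S.mon u v = S.b (⟨u, h.1⟩, ⟨v, h.2⟩) := by rw [S.b_eq]
    conv_lhs => rw [hbm]
    rw [G, S.b.constr_basis]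
    all_goals rfl
  · rcases not_and_or.mp h with h' | h'
    · rw [S.mon_zero (Or.inl (by omega)), map_zero, S.mon_zero (Or.inl (by omega)), smul_zero]
    · rw [S.mon_zero (Or.inr (by omega)), map_zero, S.mon_zero (Or.inr (by omega)), smul_zero]

lemma D_mon (u v : ℕ) : S.D (S.mon u v) = (u : k) • S.mon (u - 1) (v + (S.p - 1)) := by
  by_cases h : u < S.p ∧ v < S.p
  · have hbm : S.mon u v = S.b (⟨u, h.1⟩, ⟨v, h.2⟩) := by rw [S.b_eq]
    conv_lhs => rw [hbm]
    rw [D, S.b.constr_basis]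
    all_goals rfl
  · rcases not_and_or.mp h with h' | h'
    · -- u ≥ p
      rw [S.mon_zero (Or.inl (by omega)), map_zero]
      rcases eq_or_lt_of_le (le_of_not_gt h') with heq | hlt
      · -- u = p : the cast is zero
        haveI := S.hchar
        rw [← heq, CharP.cast_eq_zero k S.p, zero_smul]
      · rw [S.mon_zero (Or.inl (by omega)), smul_zero]
    · rw [S.mon_zero (Or.inr (by omega)), map_zero,
        S.mon_zero (Or.inr (by omega)), smul_zero]

lemma deriv_Ex : IsDeriv k A S.Ex := by
  refine S.isDeriv_of_basis _ fun uv uv' => ?_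
  rw [S.b_eq uv, S.b_eq uv', S.mon_mul, map_smul, S.Ex_mon, S.Ex_mon, S.Ex_mon,
    mul_smul_comm, smul_mul_assoc, S.mon_mul, smul_smul, smul_smul, smul_smul,
    ← add_smul]
  congr 1
  push_cast
  ring

lemma deriv_Ey : IsDeriv k A S.Ey := by
  refine S.isDeriv_of_basis _ fun uv uv' => ?_
  rw [S.b_eq uv, S.b_eq uv', S.mon_mul, map_smul, S.Ey_mon, S.Ey_mon, S.Ey_mon,
    mul_smul_comm, smul_mul_assoc, S.mon_mul, smul_smul, smul_smul, smul_smul,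
    ← add_smul]
  congr 1
  push_cast
  ring

lemma deriv_G : IsDeriv k A S.G := by
  refine S.isDeriv_of_basis _ fun uv uv' => ?_
  obtain ⟨⟨u, hu⟩, ⟨v, hv⟩⟩ := uv
  obtain ⟨⟨u', hu'⟩, ⟨v', hv'⟩⟩ := uv'
  rw [S.b_eq, S.b_eq]
  show S.G (S.mon u v * S.mon u' v') = S.mon u v * S.G (S.mon u' v') + S.G (S.mon u v) * S.mon u' v'
  rw [S.mon_mul, map_smul, S.G_mon, S.G_mon, S.G_mon, mul_smul_comm, smul_mul_assoc,
    S.mon_mul, S.mon_mul]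
  have hidx1 : v + (v' + S.e) = v + v' + S.e := by omega
  have hidx2 : v + S.e + v' = v + v' + S.e := by omega
  have hq2 : S.q ^ ((v + S.e) * u') = S.q ^ (v * u') := by
    have h1 : S.q ^ (S.e * u') = 1 := by rw [pow_mul, S.qe, one_pow]
    rw [show (v + S.e) * u' = v * u' + S.e * u' by ring, pow_add, h1, mul_one]
  rw [hidx1, hidx2, hq2, smul_smul, smul_smul, smul_smul, ← add_smul]
  congr 1
  push_cast
  ring

lemma deriv_D : IsDeriv k A S.D := by
  refine S.isDeriv_of_basis _ fun uv uv' => ?_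
  obtain ⟨⟨u, hu⟩, ⟨v, hv⟩⟩ := uv
  obtain ⟨⟨u', hu'⟩, ⟨v', hv'⟩⟩ := uv'
  rw [S.b_eq, S.b_eq]
  show S.D (S.mon u v * S.mon u' v') = S.mon u v * S.D (S.mon u' v') + S.D (S.mon u v) * S.mon u' v'
  rw [S.mon_mul, map_smul, S.D_mon, S.D_mon, S.D_mon, mul_smul_comm, smul_mul_assoc,
    S.mon_mul, S.mon_mul]
  have hp2 := S.two_lt_p
  by_cases hvv : v = 0 ∧ v' = 0
  · obtain ⟨rfl, rfl⟩ := hvv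
    simp only [Nat.zero_mul, Nat.mul_zero, pow_zero, one_smul, Nat.zero_add, Nat.add_zero]
    have hq3 : S.q ^ ((S.p - 1) * u') = 1 := by rw [pow_mul, S.qp1, one_pow]
    rw [hq3, one_smul]
    rcases Nat.eq_zero_or_pos u with rfl | hu0
    · rcases Nat.eq_zero_or_pos u' with rfl | hu'0
      · simp
      · have : (0 : ℕ) + (u' - 1) = 0 + u' - 1 := by omega
        simp [this]
    · rcases Nat.eq_zero_or_pos u' with rfl | hu'0
      · have : u - 1 + 0 = u + 0 - 1 := by omega
        simp [this]
      · have h1 : u + (u' - 1) = u + u' - 1 := by omega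
        have h2 : u - 1 + u' = u + u' - 1 := by omega
        rw [h1, h2, ← add_smul]
        congr 1
        push_cast
        ring
  · -- all monomials vanish since the y-degree is ≥ p
    have hz1 : S.mon (u + u' - 1) (v + v' + (S.p - 1)) = 0 := S.mon_zero (Or.inr (by omega))
    have hz2 : S.mon (u + (u' - 1)) (v + (v' + (S.p - 1))) = 0 := S.mon_zero (Or.inr (by omega))
    have hz3 : S.mon (u - 1 + u') (v + (S.p - 1) + v') = 0 := S.mon_zero (Or.inr (by omega))
    rw [hz1, hz2, hz3]
    simp

lemma one_lt_p : 1 < S.p := S.hp.one_lt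

lemma coef_Ex (z : A) (i j : ℕ) (hi : i < S.p) (hj : j < S.p) :
    S.coef (S.Ex z) i j = S.coef z i j * (i : k) :=
  S.coef_map_single S.Ex (fun u _ => (u : k)) (fun u _ => u) (fun _ v => v)
    (fun u v _ _ => S.Ex_mon u v) z i j i j hi hj hi hj rfl rfl
    (fun _ _ _ _ h1 h2 _ => ⟨h1, h2⟩)

lemma coef_Ey (z : A) (i j : ℕ) (hi : i < S.p) (hj : j < S.p) :
    S.coef (S.Ey z) i j = S.coef z i j * (j : k) :=
  S.coef_map_single S.Ey (fun _ v => (v : k)) (fun u _ => u) (fun _ v => v)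
    (fun u v _ _ => S.Ey_mon u v) z i j i j hi hj hi hj rfl rfl
    (fun _ _ _ _ h1 h2 _ => ⟨h1, h2⟩)

lemma coef_G (z : A) : S.coef (S.G z) 1 S.e = S.coef z 1 0 := by
  have h1p : 1 < S.p := S.one_lt_p
  have hep : S.e < S.p := S.e_lt_p
  have := S.coef_map_single S.G (fun u _ => (u : k)) (fun u _ => u) (fun _ v => v + S.e)
    (fun u v _ _ => S.G_mon u v) z 1 S.e 1 0 h1p hep h1p (by omega) rfl
    (show 0 + S.e = S.e by omega)
    (fun u v _ _ h1 h2 _ => ⟨h1, by have h2' : v + S.e = S.e := h2; omega⟩)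
  simpa using this

lemma coef_D (z : A) : S.coef (S.D z) 0 (S.p - 1) = S.coef z 1 0 := by
  have h1p : 1 < S.p := S.one_lt_p
  have := S.coef_map_single S.D (fun u _ => (u : k)) (fun u _ => u - 1)
    (fun _ v => v + (S.p - 1)) (fun u v _ _ => S.D_mon u v) z 0 (S.p - 1) 1 0
    (by omega) (by omega) h1p (by omega) (show 1 - 1 = 0 by omega)
    (show 0 + (S.p - 1) = S.p - 1 by omega) ?_
  · simpa using this
  · intro u v _ _ h1 h2 h0
    have h1' : u - 1 = 0 := h1
    have h2' : v + (S.p - 1) = S.p - 1 := h2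
    have hp2 := S.two_lt_p
    refine ⟨?_, by omega⟩
    rcases Nat.eq_zero_or_pos u with rfl | hu
    · exact absurd Nat.cast_zero h0
    · omega

lemma coef_mulR_ypow (m : ℕ) (z : A) (i j : ℕ) (hi : i < S.p) (hj : j < S.p) (hm : m ≤ j) :
    S.coef (z * S.y ^ m) i j = S.coef z i (j - m) := by
  have hT : ∀ u v : ℕ, u < S.p → v < S.p →
      (LinearMap.mulRight k (S.y ^ m)) (S.mon u v) = (1 : k) • S.mon u (v + m) := by
    intro u v _ _
    rw [LinearMap.mulRight_apply, S.ypow_eq, S.mon_mul]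
    simp
  have := S.coef_map_single (LinearMap.mulRight k (S.y ^ m)) (fun _ _ => (1 : k))
    (fun u _ => u) (fun _ v => v + m) hT z i j i (j - m) hi hj hi (by omega) rfl
    (show j - m + m = j by omega)
    (fun u v _ _ h1 h2 _ => ⟨h1, by have h2' : v + m = j := h2; omega⟩)
  rw [LinearMap.mulRight_apply] at this
  simpa using this

lemma coef_mulL_x (z : A) (j : ℕ) (hj : j < S.p) :
    S.coef (S.x * z) 1 j = S.coef z 0 j := by
  have hT : ∀ u v : ℕ, u < S.p → v < S.p →
      (LinearMap.mulLeft k S.x) (S.mon u v) = (1 : k) • S.mon (1 + u) v := by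
    intro u v _ _
    rw [LinearMap.mulLeft_apply, S.x_eq, S.mon_mul]
    simp
  have := S.coef_map_single (LinearMap.mulLeft k S.x) (fun _ _ => (1 : k))
    (fun u _ => 1 + u) (fun _ v => v) hT z 1 j 0 j S.one_lt_p hj (by omega) hj
    (show 1 + 0 = 1 by omega) rfl
    (fun u v _ _ h1 h2 _ => ⟨by have h1' : 1 + u = 1 := h1; omega, h2⟩)
  rw [LinearMap.mulLeft_apply] at this
  simpa using this

lemma coef_mulL_ypow (m : ℕ) (z : A) (hm : m + 1 < S.p) :
    S.coef (S.y ^ m * z) 0 (m + 1) = S.coef z 0 1 := by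
  have hT : ∀ u v : ℕ, u < S.p → v < S.p →
      (LinearMap.mulLeft k (S.y ^ m)) (S.mon u v) = (S.q ^ (m * u)) • S.mon (0 + u) (m + v) := by
    intro u v _ _
    rw [LinearMap.mulLeft_apply, S.ypow_eq, S.mon_mul]
  have := S.coef_map_single (LinearMap.mulLeft k (S.y ^ m)) (fun u _ => S.q ^ (m * u))
    (fun u _ => 0 + u) (fun _ v => m + v) hT z 0 (m + 1) 0 1 (by omega) (by omega)
    (by omega) (by omega) (show 0 + 0 = 0 by omega) (show m + 1 = m + 1 by omega)
    (fun u v _ _ h1 h2 _ =>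
      ⟨by have h1' : 0 + u = 0 := h1; omega, by have h2' : m + v = m + 1 := h2; omega⟩)
  rw [LinearMap.mulLeft_apply] at this
  simpa using this

lemma coef_ad_x_pos (c : A) (i j : ℕ) (hi : i < S.p) (hj : j < S.p) (h1 : 1 ≤ i) :
    S.coef (c * S.x - S.x * c) i j = S.coef c (i - 1) j * (S.q ^ j - 1) := by
  have hT : ∀ u v : ℕ, u < S.p → v < S.p →
      (LinearMap.mulRight k S.x - LinearMap.mulLeft k S.x) (S.mon u v)
        = (S.q ^ v - 1) • S.mon (u + 1) v := by
    intro u v _ _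
    have hA : S.mon u v * S.x = S.q ^ v • S.mon (u + 1) v := by
      rw [S.x_eq, S.mon_mul]; simp
    have hB : S.x * S.mon u v = (1 : k) • S.mon (u + 1) v := by
      rw [S.x_eq, S.mon_mul, Nat.zero_mul, pow_zero, Nat.zero_add, Nat.add_comm 1 u]
    rw [LinearMap.sub_apply, LinearMap.mulRight_apply, LinearMap.mulLeft_apply, hA, hB, sub_smul]
  have := S.coef_map_single (LinearMap.mulRight k S.x - LinearMap.mulLeft k S.x)
    (fun _ v => S.q ^ v - 1) (fun u _ => u + 1) (fun _ v => v) hT c i j (i - 1) j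
    hi hj (by omega) hj (show i - 1 + 1 = i by omega) rfl
    (fun u v _ _ h1 h2 _ => ⟨by have h1' : u + 1 = i := h1; omega, h2⟩)
  rw [LinearMap.sub_apply, LinearMap.mulRight_apply, LinearMap.mulLeft_apply] at this
  simpa using this

lemma coef_ad_x_zero (c : A) (j : ℕ) :
    S.coef (c * S.x - S.x * c) 0 j = 0 := by
  by_cases hj : j < S.p
  · have hT : ∀ u v : ℕ, u < S.p → v < S.p →
        (LinearMap.mulRight k S.x - LinearMap.mulLeft k S.x) (S.mon u v)
          = (S.q ^ v - 1) • S.mon (u + 1) v := by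
      intro u v _ _
      have hA : S.mon u v * S.x = S.q ^ v • S.mon (u + 1) v := by
        rw [S.x_eq, S.mon_mul]; simp
      have hB : S.x * S.mon u v = (1 : k) • S.mon (u + 1) v := by
        rw [S.x_eq, S.mon_mul, Nat.zero_mul, pow_zero, Nat.zero_add, Nat.add_comm 1 u]
      rw [LinearMap.sub_apply, LinearMap.mulRight_apply, LinearMap.mulLeft_apply, hA, hB, sub_smul]
    have hmap := S.coef_map (LinearMap.mulRight k S.x - LinearMap.mulLeft k S.x)
      (fun _ v => S.q ^ v - 1) (fun u _ => u + 1) (fun _ v => v) hT c 0 j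
    rw [LinearMap.sub_apply, LinearMap.mulRight_apply, LinearMap.mulLeft_apply] at hmap
    rw [hmap]
    refine Finset.sum_eq_zero fun uv _ => ?_
    rw [S.coef_mon, if_neg, mul_zero, mul_zero]
    rintro ⟨h1, -, -, -⟩
    have h1' : (uv.1 : ℕ) + 1 = 0 := h1
    omega
  · exact S.coef_oor _ (by omega)

lemma coef_ad_y_pos (c : A) (i j : ℕ) (hi : i < S.p) (hj : j < S.p) (h1 : 1 ≤ j) :
    S.coef (c * S.y - S.y * c) i j = S.coef c i (j - 1) * (1 - S.q ^ i) := by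
  have hT : ∀ u v : ℕ, u < S.p → v < S.p →
      (LinearMap.mulRight k S.y - LinearMap.mulLeft k S.y) (S.mon u v)
        = (1 - S.q ^ u) • S.mon u (v + 1) := by
    intro u v _ _
    have hA : S.mon u v * S.y = (1 : k) • S.mon u (v + 1) := by
      rw [S.y_eq, S.mon_mul]; simp
    have hB : S.y * S.mon u v = S.q ^ u • S.mon u (v + 1) := by
      rw [S.y_eq, S.mon_mul, Nat.one_mul, Nat.zero_add, Nat.add_comm 1 v]
    rw [LinearMap.sub_apply, LinearMap.mulRight_apply, LinearMap.mulLeft_apply, hA, hB, sub_smul]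
  have := S.coef_map_single (LinearMap.mulRight k S.y - LinearMap.mulLeft k S.y)
    (fun u _ => 1 - S.q ^ u) (fun u _ => u) (fun _ v => v + 1) hT c i j i (j - 1)
    hi hj hi (by omega) rfl (show j - 1 + 1 = j by omega)
    (fun u v _ _ h1 h2 _ => ⟨h1, by have h2' : v + 1 = j := h2; omega⟩)
  rw [LinearMap.sub_apply, LinearMap.mulRight_apply, LinearMap.mulLeft_apply] at this
  simpa using this

lemma coef_ad_y_zero (c : A) (i : ℕ) :
    S.coef (c * S.y - S.y * c) i 0 = 0 := by
  by_cases hi : i < S.p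
  · have hT : ∀ u v : ℕ, u < S.p → v < S.p →
        (LinearMap.mulRight k S.y - LinearMap.mulLeft k S.y) (S.mon u v)
          = (1 - S.q ^ u) • S.mon u (v + 1) := by
      intro u v _ _
      have hA : S.mon u v * S.y = (1 : k) • S.mon u (v + 1) := by
        rw [S.y_eq, S.mon_mul]; simp
      have hB : S.y * S.mon u v = S.q ^ u • S.mon u (v + 1) := by
        rw [S.y_eq, S.mon_mul, Nat.one_mul, Nat.zero_add, Nat.add_comm 1 v]
      rw [LinearMap.sub_apply, LinearMap.mulRight_apply, LinearMap.mulLeft_apply, hA, hB, sub_smul]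
    have hmap := S.coef_map (LinearMap.mulRight k S.y - LinearMap.mulLeft k S.y)
      (fun u _ => 1 - S.q ^ u) (fun u _ => u) (fun _ v => v + 1) hT c i 0
    rw [LinearMap.sub_apply, LinearMap.mulRight_apply, LinearMap.mulLeft_apply] at hmap
    rw [hmap]
    refine Finset.sum_eq_zero fun uv _ => ?_
    rw [S.coef_mon, if_neg, mul_zero, mul_zero]
    rintro ⟨-, h2, -, -⟩
    have h2' : (uv.2 : ℕ) + 1 = 0 := h2
    omega
  · exact S.coef_oor _ (by omega)

lemma Ex_x : S.Ex S.x = S.x := by rw [S.x_eq, S.Ex_mon]; simp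
lemma Ex_y : S.Ex S.y = 0 := by rw [S.y_eq, S.Ex_mon]; simp
lemma Ey_x : S.Ey S.x = 0 := by rw [S.x_eq, S.Ey_mon]; simp
lemma Ey_y : S.Ey S.y = S.y := by rw [S.y_eq, S.Ey_mon]; simp
lemma G_x : S.G S.x = S.mon 1 S.e := by rw [S.x_eq, S.G_mon]; simp
lemma G_y : S.G S.y = 0 := by rw [S.y_eq, S.G_mon]; simp
lemma D_x : S.D S.x = S.mon 0 (S.p - 1) := by rw [S.x_eq, S.D_mon]; simp
lemma D_y : S.D S.y = 0 := by rw [S.y_eq, S.D_mon]; simp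

lemma coef_f_ypow (f : Module.End k A) (hf : IsDeriv k A f) :
    ∀ m : ℕ, 1 ≤ m → m < S.p → S.coef (f (S.y ^ m)) 0 m = (m : k) * S.coef (f S.y) 0 1 := by
  intro m
  induction m with
  | zero => omega
  | succ n ih =>
    intro _ hmp
    rcases Nat.eq_zero_or_pos n with rfl | hn
    · rw [pow_one, Nat.cast_one, one_mul]
    · have hstep : f (S.y ^ (n + 1)) = S.y ^ n * f S.y + f (S.y ^ n) * S.y := by
        rw [pow_succ]; exact hf _ _
      rw [hstep, S.coef_add, S.coef_mulL_ypow n (f S.y) hmp]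
      have h2 := S.coef_mulR_ypow 1 (f (S.y ^ n)) 0 (n + 1) (by omega) (by omega) (by omega)
      rw [pow_one] at h2
      rw [h2, show n + 1 - 1 = n by omega, ih hn (by omega)]
      push_cast
      ring

/-- Coordinate conditions characterizing inner derivations via their values on `x` and `y`. -/
def Conds (w₁ w₂ : A) : Prop :=
  (∀ j : ℕ, S.coef w₁ 0 j = 0) ∧
  (∀ i j : ℕ, S.q ^ j = 1 → S.coef w₁ i j = 0) ∧
  (∀ i : ℕ, S.coef w₂ i 0 = 0) ∧
  (∀ i j : ℕ, S.q ^ i = 1 → S.coef w₂ i j = 0) ∧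
  (∀ i j : ℕ, (1 - S.q ^ i) * S.coef w₁ (i + 1) j = (S.q ^ j - 1) * S.coef w₂ i (j + 1))

lemma inner_conds (h : Module.End k A) (hin : IsInner k A h) : S.Conds (h S.x) (h S.y) := by
  obtain ⟨c, hc⟩ := hin
  have hx' : h S.x = c * S.x - S.x * c := hc S.x
  have hy' : h S.y = c * S.y - S.y * c := hc S.y
  rw [hx', hy']
  have hp2 := S.two_lt_p
  refine ⟨?_, ?_, ?_, ?_, ?_⟩
  · intro j
    exact S.coef_ad_x_zero c j
  · intro i j hqj
    by_cases hij : i < S.p ∧ j < S.p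
    · rcases Nat.eq_zero_or_pos i with rfl | hi
      · exact S.coef_ad_x_zero c j
      · rw [S.coef_ad_x_pos c i j hij.1 hij.2 hi, hqj, sub_self, mul_zero]
    · exact S.coef_oor _ (by omega)
  · intro i
    exact S.coef_ad_y_zero c i
  · intro i j hqi
    by_cases hij : i < S.p ∧ j < S.p
    · rcases Nat.eq_zero_or_pos j with rfl | hj
      · exact S.coef_ad_y_zero c i
      · rw [S.coef_ad_y_pos c i j hij.1 hij.2 hj, hqi, sub_self, mul_zero]
    · exact S.coef_oor _ (by omega)
  · intro i j
    by_cases hj : j < S.p - 1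
    · by_cases hi : i < S.p - 1
      · rw [S.coef_ad_x_pos c (i + 1) j (by omega) (by omega) (by omega),
          S.coef_ad_y_pos c i (j + 1) (by omega) (by omega) (by omega)]
        rw [show i + 1 - 1 = i by omega, show j + 1 - 1 = j by omega]
        ring
      · -- i ≥ p - 1
        rcases Nat.lt_or_ge i S.p with hip | hip
        · -- i = p - 1 : both sides vanish since q^(p-1) = 1
          have hieq : i = S.p - 1 := by omega
          have hqi : S.q ^ i = 1 := by rw [hieq]; exact S.qp1
          rw [hqi, sub_self, zero_mul]
          rw [S.coef_ad_y_pos c i (j + 1) (by omega) (by omega) (by omega), hqi, sub_self,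
            mul_zero, mul_zero]
        · rw [S.coef_oor _ (Or.inl (by omega)), S.coef_oor _ (Or.inl (by omega)),
            mul_zero, mul_zero]
    · -- j ≥ p - 1
      rcases Nat.lt_or_ge j S.p with hjp | hjp
      · -- j = p - 1
        have hjeq : j = S.p - 1 := by omega
        have hqj : S.q ^ j = 1 := by rw [hjeq]; exact S.qp1
        rw [hqj, sub_self, zero_mul]
        by_cases hi1 : i + 1 < S.p
        · rw [S.coef_ad_x_pos c (i + 1) j hi1 hjp (by omega), hqj, sub_self, mul_zero, mul_zero]
        · rw [S.coef_oor _ (Or.inl (by omega)), mul_zero]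
      · rw [S.coef_oor (c * S.x - S.x * c) (Or.inr (by omega)),
          S.coef_oor (c * S.y - S.y * c) (Or.inr (by omega)), mul_zero, mul_zero]

lemma isDeriv_ad (c : A) :
    IsDeriv k A (LinearMap.mulLeft k c - LinearMap.mulRight k c) := by
  intro a b
  simp only [LinearMap.sub_apply, LinearMap.mulLeft_apply, LinearMap.mulRight_apply]
  noncomm_ring

lemma deriv_one (f : Module.End k A) (hf : IsDeriv k A f) : f 1 = 0 := by
  have h := hf 1 1
  rw [one_mul, one_mul, mul_one] at h
  exact left_eq_add.mp h

lemma ext_xy (f g : Module.End k A) (hf : IsDeriv k A f) (hg : IsDeriv k A g)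
    (h1 : f S.x = g S.x) (h2 : f S.y = g S.y) : f = g := by
  have hxpow : ∀ u : ℕ, f (S.x ^ u) = g (S.x ^ u) := by
    intro u
    induction u with
    | zero => rw [pow_zero, deriv_one f hf, deriv_one g hg]
    | succ n ih => rw [pow_succ, hf, hg, ih, h1]
  have hypow : ∀ v : ℕ, f (S.y ^ v) = g (S.y ^ v) := by
    intro v
    induction v with
    | zero => rw [pow_zero, deriv_one f hf, deriv_one g hg]
    | succ n ih => rw [pow_succ, hf, hg, ih, h2]
  refine S.b.ext fun uv => ?_
  rw [S.b_eq uv, mon, hf, hg, hxpow, hypow]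

lemma conds_inner (f : Module.End k A) (hf : IsDeriv k A f)
    (hC : S.Conds (f S.x) (f S.y)) : IsInner k A f := by
  classical
  obtain ⟨ha, hbb, hcc, hd, he⟩ := hC
  set c' : ℕ → ℕ → k := fun u v =>
    if S.q ^ v = 1 then
      (if S.q ^ u = 1 then 0 else S.coef (f S.y) u (v + 1) / (1 - S.q ^ u))
    else S.coef (f S.x) (u + 1) v / (S.q ^ v - 1) with hc'def
  set c : A := S.b.equivFun.symm (fun uv => c' (uv.1 : ℕ) (uv.2 : ℕ)) with hcdef
  have hcoefc : ∀ u v : ℕ, u < S.p → v < S.p → S.coef c u v = c' u v := by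
    intro u v hu hv
    rw [S.coef_apply c u v hu hv, hcdef]
    rw [show S.b.equivFun (S.b.equivFun.symm fun uv => c' (uv.1 : ℕ) (uv.2 : ℕ))
      = fun uv => c' (uv.1 : ℕ) (uv.2 : ℕ) from S.b.equivFun.apply_symm_apply _]
  have hfx : f S.x = c * S.x - S.x * c := by
    refine S.ext_coef _ _ fun i j hi hj => ?_
    rcases Nat.eq_zero_or_pos i with rfl | hi1
    · rw [S.coef_ad_x_zero, ha j]
    · rw [S.coef_ad_x_pos c i j hi hj hi1, hcoefc (i - 1) j (by omega) hj]
      by_cases hqj : S.q ^ j = 1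
      · rw [hbb i j hqj, hqj, sub_self, mul_zero]
      · rw [hc'def]
        simp only [if_neg hqj]
        rw [show i - 1 + 1 = i by omega]
        rw [div_mul_cancel₀ _ (sub_ne_zero_of_ne hqj)]
  have hfy : f S.y = c * S.y - S.y * c := by
    refine S.ext_coef _ _ fun i j hi hj => ?_
    rcases Nat.eq_zero_or_pos j with rfl | hj1
    · rw [S.coef_ad_y_zero, hcc i]
    · rw [S.coef_ad_y_pos c i j hi hj hj1, hcoefc i (j - 1) hi (by omega)]
      by_cases hqi : S.q ^ i = 1
      · rw [hd i j hqi, hqi, sub_self, mul_zero]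
      · rw [hc'def]
        simp only [if_neg hqi]
        by_cases hqv : S.q ^ (j - 1) = 1
        · simp only [if_pos hqv]
          rw [show j - 1 + 1 = j by omega]
          rw [div_mul_cancel₀ _ (sub_ne_zero_of_ne (fun hh => hqi hh.symm))]
        · simp only [if_neg hqv]
          have hee := he i (j - 1)
          rw [show j - 1 + 1 = j by omega] at hee
          have hq1 : S.q ^ (j - 1) - 1 ≠ 0 := sub_ne_zero_of_ne hqv
          rw [div_mul_eq_mul_div, eq_div_iff hq1]
          linear_combination -hee
  have hgd := isDeriv_ad (k := k) (A := A) c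
  have : f = LinearMap.mulLeft k c - LinearMap.mulRight k c := by
    refine S.ext_xy f _ hf hgd ?_ ?_
    · rw [hfx]; simp [LinearMap.sub_apply]
    · rw [hfy]; simp [LinearMap.sub_apply]
  exact ⟨c, fun a => by rw [this]; simp [LinearMap.sub_apply]⟩

include S in
lemma main (f : Module.End k A) (hf : IsDeriv k A f)
    (hc : ∀ g : Module.End k A, IsDeriv k A g → IsInner k A (f * g - g * f)) :
    IsInner k A f := by
  have hp2 := S.two_lt_p
  have hep := S.e_lt_p
  have h1p := S.one_lt_p
  have he2 := S.he
  -- the four test derivations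
  obtain ⟨hEa, hEb, hEc, hEd, hEe⟩ := S.inner_conds _ (hc S.Ex S.deriv_Ex)
  obtain ⟨hYa, hYb, hYc, hYd, hYe⟩ := S.inner_conds _ (hc S.Ey S.deriv_Ey)
  obtain ⟨hGa, hGb, -, -, -⟩ := S.inner_conds _ (hc S.G S.deriv_G)
  obtain ⟨hDa, -, -, -, -⟩ := S.inner_conds _ (hc S.D S.deriv_D)
  -- values of the brackets on x and y
  have hEx_x : (f * S.Ex - S.Ex * f) S.x = f S.x - S.Ex (f S.x) := by
    simp [LinearMap.sub_apply, Module.End.mul_apply, S.Ex_x]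
  have hEx_y : (f * S.Ex - S.Ex * f) S.y = - S.Ex (f S.y) := by
    simp [LinearMap.sub_apply, Module.End.mul_apply, S.Ex_y]
  have hEy_x : (f * S.Ey - S.Ey * f) S.x = - S.Ey (f S.x) := by
    simp [LinearMap.sub_apply, Module.End.mul_apply, S.Ey_x]
  have hEy_y : (f * S.Ey - S.Ey * f) S.y = f S.y - S.Ey (f S.y) := by
    simp [LinearMap.sub_apply, Module.End.mul_apply, S.Ey_y]
  -- coefficient formulas for the Euler brackets
  have cEx : ∀ i j : ℕ, i < S.p → j < S.p →
      S.coef ((f * S.Ex - S.Ex * f) S.x) i j = S.coef (f S.x) i j * (1 - (i : k)) := by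
    intro i j hi hj
    rw [hEx_x, S.coef_sub, S.coef_Ex _ _ _ hi hj]
    ring
  have cExy : ∀ i j : ℕ, i < S.p → j < S.p →
      S.coef ((f * S.Ex - S.Ex * f) S.y) i j = -(S.coef (f S.y) i j * (i : k)) := by
    intro i j hi hj
    rw [hEx_y, S.coef_neg, S.coef_Ex _ _ _ hi hj]
  have cYx : ∀ i j : ℕ, i < S.p → j < S.p →
      S.coef ((f * S.Ey - S.Ey * f) S.x) i j = -(S.coef (f S.x) i j * (j : k)) := by
    intro i j hi hj
    rw [hEy_x, S.coef_neg, S.coef_Ey _ _ _ hi hj]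
  have cYy : ∀ i j : ℕ, i < S.p → j < S.p →
      S.coef ((f * S.Ey - S.Ey * f) S.y) i j = S.coef (f S.y) i j * (1 - (j : k)) := by
    intro i j hi hj
    rw [hEy_y, S.coef_sub, S.coef_Ey _ _ _ hi hj]
    ring
  -- the two special coefficients
  have hM01 : S.coef (f S.y) 0 1 = 0 := by
    have hG_x : (f * S.G - S.G * f) S.x = f (S.mon 1 S.e) - S.G (f S.x) := by
      simp [LinearMap.sub_apply, Module.End.mul_apply, S.G_x]
    have hb' := hGb 1 S.e S.qe
    rw [hG_x, S.coef_sub, S.coef_G] at hb'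
    have hm1e : S.mon 1 S.e = S.x * S.y ^ S.e := by rw [mon, pow_one]
    have hfm : f (S.mon 1 S.e) = S.x * f (S.y ^ S.e) + f S.x * S.y ^ S.e := by
      rw [hm1e]; exact hf _ _
    rw [hfm, S.coef_add, S.coef_mulL_x _ _ hep,
      S.coef_mulR_ypow S.e (f S.x) 1 S.e h1p hep (le_refl _),
      show S.e - S.e = 0 by omega,
      S.coef_f_ypow f hf S.e (by omega) hep] at hb'
    have h5 : (S.e : k) * S.coef (f S.y) 0 1 = 0 := by linear_combination hb'
    have hcast : ((S.e : ℕ) : k) ≠ 0 := S.cast_ne_zero (by omega) hep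
    exact (mul_eq_zero.mp h5).resolve_left hcast
  have hL10 : S.coef (f S.x) 1 0 = 0 := by
    have hD_x : (f * S.D - S.D * f) S.x = f (S.mon 0 (S.p - 1)) - S.D (f S.x) := by
      simp [LinearMap.sub_apply, Module.End.mul_apply, S.D_x]
    have ha' := hDa (S.p - 1)
    rw [hD_x, S.coef_sub, S.coef_D] at ha'
    have hmon : S.mon 0 (S.p - 1) = S.y ^ (S.p - 1) := (S.ypow_eq _).symm
    rw [hmon, S.coef_f_ypow f hf (S.p - 1) (by omega) (by omega), hM01, mul_zero] at ha'
    linear_combination -ha'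
  -- condition (a)
  have Fa : ∀ j : ℕ, S.coef (f S.x) 0 j = 0 := by
    intro j
    by_cases hj : j < S.p
    · have h0 := hEa j
      rw [cEx 0 j (by omega) hj] at h0
      simpa using h0
    · exact S.coef_oor _ (by omega)
  -- condition (b)
  have Fb : ∀ i j : ℕ, S.q ^ j = 1 → S.coef (f S.x) i j = 0 := by
    intro i j hqj
    by_cases hij : i < S.p ∧ j < S.p
    · by_cases hi1 : i = 1
      · subst hi1
        rcases Nat.eq_zero_or_pos j with rfl | hj0
        · exact hL10
        · have h0 := hYb 1 j hqj
          rw [cYx 1 j hij.1 hij.2] at h0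
          have hne : (j : k) ≠ 0 := S.cast_ne_zero hj0 hij.2
          exact (mul_eq_zero.mp (neg_eq_zero.mp h0)).resolve_right hne
      · have h0 := hEb i j hqj
        rw [cEx i j hij.1 hij.2] at h0
        have hne : (1 : k) - (i : k) ≠ 0 :=
          fun hz => hi1 (S.cast_eq_one hij.1 (sub_eq_zero.mp hz).symm)
        exact (mul_eq_zero.mp h0).resolve_right hne
    · exact S.coef_oor _ (by omega)
  -- condition (c)
  have Fc : ∀ i : ℕ, S.coef (f S.y) i 0 = 0 := by
    intro i
    by_cases hi : i < S.p
    · have h0 := hYc i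
      rw [cYy i 0 hi (by omega)] at h0
      simpa using h0
    · exact S.coef_oor _ (by omega)
  -- condition (d)
  have Fd : ∀ i j : ℕ, S.q ^ i = 1 → S.coef (f S.y) i j = 0 := by
    intro i j hqi
    by_cases hij : i < S.p ∧ j < S.p
    · rcases Nat.eq_zero_or_pos i with rfl | hi0
      · by_cases hj1 : j = 1
        · subst hj1; exact hM01
        · have h0 := hYd 0 j hqi
          rw [cYy 0 j (by omega) hij.2] at h0
          have hne : (1 : k) - (j : k) ≠ 0 :=
            fun hz => hj1 (S.cast_eq_one hij.2 (sub_eq_zero.mp hz).symm)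
          exact (mul_eq_zero.mp h0).resolve_right hne
      · have h0 := hEd i j hqi
        rw [cExy i j hij.1 hij.2] at h0
        have hne : (i : k) ≠ 0 := S.cast_ne_zero hi0 hij.1
        exact (mul_eq_zero.mp (neg_eq_zero.mp h0)).resolve_right hne
    · exact S.coef_oor _ (by omega)
  -- condition (e)
  have Fe : ∀ i j : ℕ, (1 - S.q ^ i) * S.coef (f S.x) (i + 1) j
      = (S.q ^ j - 1) * S.coef (f S.y) i (j + 1) := by
    intro i j
    by_cases hip : i < S.p
    · by_cases hjp : j + 1 < S.p
      · rcases Nat.eq_zero_or_pos i with rfl | hi0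
        · rw [pow_zero, sub_self, zero_mul, Fd 0 (j + 1) (pow_zero S.q), mul_zero]
        · by_cases hi1p : i + 1 < S.p
          · have h0 := hEe i j
            rw [cEx (i + 1) j hi1p (by omega), cExy i (j + 1) hip hjp] at h0
            have hne : (i : k) ≠ 0 := S.cast_ne_zero hi0 hip
            have h0' : (-(i : k)) * ((1 - S.q ^ i) * S.coef (f S.x) (i + 1) j)
                = (-(i : k)) * ((S.q ^ j - 1) * S.coef (f S.y) i (j + 1)) := by
              push_cast at h0
              linear_combination h0
            exact mul_left_cancel₀ (neg_ne_zero.mpr hne) h0'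
          · have hieq : i = S.p - 1 := by omega
            have hqi : S.q ^ i = 1 := by rw [hieq]; exact S.qp1
            rw [hqi, sub_self, zero_mul, Fd i (j + 1) hqi, mul_zero]
      · rw [S.coef_oor (f S.y) (Or.inr (by omega)), mul_zero]
        rcases Nat.lt_or_ge j S.p with hjp2 | hjp2
        · have hjeq : j = S.p - 1 := by omega
          have hqj : S.q ^ j = 1 := by rw [hjeq]; exact S.qp1
          rw [Fb (i + 1) j hqj, mul_zero]
        · rw [S.coef_oor (f S.x) (Or.inr (by omega)), mul_zero]
    · rw [S.coef_oor (f S.x) (Or.inl (by omega)), S.coef_oor (f S.y) (Or.inl (by omega)),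
        mul_zero, mul_zero]
  exact S.conds_inner f hf ⟨Fa, Fb, Fc, Fd, Fe⟩

end QCI

/-- Theorem 1.1(ii): the Lie algebra `L = HH¹(A)` has trivial center. -/
theorem center_HH1_quantum_complete_intersection_eq_bot
    (k : Type*) [Field k] (p e : ℕ) (q : k)
    (hp : p.Prime) (hodd : Odd p) (hchar : CharP k p)
    (hq : orderOf q = e) (he : 2 ≤ e) (hediv : e ∣ p - 1)
    (A : Type*) [Ring A] [Algebra k A] (x y : A)
    (hx : x ^ p = 0) (hy : y ^ p = 0) (hyx : y * x = q • (x * y))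
    (b : Module.Basis (Fin p × Fin p) k A)
    (hb : ∀ ij : Fin p × Fin p, b ij = x ^ (ij.1 : ℕ) * y ^ (ij.2 : ℕ)) :
    LieAlgebra.center k (HH1 k A) = ⊥ := by
  set S : QCI k A := ⟨p, e, q, x, y, b, hp, hodd, hchar, hq, he, hediv, hx, hy, hyx, hb⟩
  rw [LieSubmodule.eq_bot_iff]
  intro z hz
  obtain ⟨F, rfl⟩ := LieSubmodule.Quotient.surjective_mk' (IDer k A) z
  rw [LieModule.mem_maxTrivSubmodule] at hz
  rw [LieSubmodule.Quotient.mk_eq_zero]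
  have hFi : IsInner k A (F : Module.End k A) := by
    apply S.main (F : Module.End k A) F.2
    intro g hg
    have hzg := hz (LieSubmodule.Quotient.mk' (IDer k A) ⟨g, hg⟩)
    have hzg' : (⁅(⟨g, hg⟩ : Der k A), F⁆ : Der k A) ∈ IDer k A := by
      rw [← LieSubmodule.Quotient.mk_eq_zero']
      exact hzg
    obtain ⟨c, hcc⟩ := hzg'
    refine ⟨-c, fun a => ?_⟩
    have h2 := hcc a
    have h1 : ((⁅(⟨g, hg⟩ : Der k A), F⁆ : Der k A) : Module.End k A) a
        = g ((F : Module.End k A) a) - (F : Module.End k A) (g a) := rfl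
    rw [h1] at h2
    have h3 : ((F : Module.End k A) * g - g * (F : Module.End k A)) a
        = (F : Module.End k A) (g a) - g ((F : Module.End k A) a) := rfl
    rw [h3]
    calc (F : Module.End k A) (g a) - g ((F : Module.End k A) a)
        = -(g ((F : Module.End k A) a) - (F : Module.End k A) (g a)) := (neg_sub _ _).symm
    _ = -(c * a - a * c) := by rw [h2]
    _ = (-c) * a - a * (-c) := by noncomm_ring
  exact hFi
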